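/- Let a₁, a₂ be coprime integers greater than 1. Every integer x in the interval (0, a₁·a₂) not belonging to ⟨a₁, a₂⟩ and not divisible by a₁ or a₂ can be written uniquely as x = a₁·a₂ − k·a₂ − j·a₁ with integers 1 ≤ k < a₁ and 1 ≤ j < a₂. -/
import Mathlib


theorem stmt_8 (a₁ a₂ : ℕ) (h₁ : 1 < a₁) (h₂ : 1 < a₂)
    (hcop : Nat.gcd a₁ a₂ = 1) (x : ℕ) (hx : 0 < x) (hxlt : x < a₁ * a₂)
    (hxS : ¬ ∃ l₁ l₂ : ℕ, x = l₁ * a₁ + l₂ * a₂)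
    (hd₁ : ¬ a₁ ∣ x) (hd₂ : ¬ a₂ ∣ x) :
    ∃! p : ℕ × ℕ, 1 ≤ p.1 ∧ p.1 < a₁ ∧ 1 ≤ p.2 ∧ p.2 < a₂ ∧
      (x : ℤ) = (a₁ : ℤ) * a₂ - p.1 * a₂ - p.2 * a₁ := by
  haveI : NeZero a₁ := ⟨by omega⟩
  have hcop' : Nat.Coprime a₂ a₁ := Nat.coprime_comm.mp hcop
  set k : ℕ := ((-(x : ZMod a₁)) * (a₂ : ZMod a₁)⁻¹).val with hk
  have hklt : k < a₁ := ZMod.val_lt _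
  have hdvd : a₁ ∣ (x + k * a₂) := by
    have h1 : ((x + k * a₂ : ℕ) : ZMod a₁) = 0 := by
      push_cast
      rw [hk, ZMod.natCast_val, ZMod.cast_id]
      calc (x : ZMod a₁) + (-(x : ZMod a₁) * (a₂ : ZMod a₁)⁻¹) * a₂
          = x + (-(x:ZMod a₁)) * ((a₂ : ZMod a₁) * (a₂ : ZMod a₁)⁻¹) := by ring
        _ = 0 := by rw [ZMod.coe_mul_inv_eq_one a₂ hcop']; ring
    exact (ZMod.natCast_eq_zero_iff _ _).mp h1
  have hk1 : 1 ≤ k := by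
    rcases Nat.eq_zero_or_pos k with h0 | h0
    · exfalso; apply hd₁; simpa [h0] using hdvd
    · exact h0
  obtain ⟨t, ht⟩ := hdvd
  have ht1 : 1 ≤ t := by
    rcases Nat.eq_zero_or_pos t with h0 | h0
    · exfalso; rw [h0, Nat.mul_zero] at ht; omega
    · exact h0
  have htlt : t < a₂ := by
    by_contra hge
    push_neg at hge
    apply hxS
    refine ⟨t - a₂, a₁ - k, ?_⟩
    have ht' : (x : ℤ) + k * a₂ = a₁ * t := by exact_mod_cast ht
    zify [hge, hklt.le]
    linear_combination ht'
  have ht' : (x : ℤ) + k * a₂ = a₁ * t := by exact_mod_cast ht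
  have heq : (x : ℤ) = (a₁ : ℤ) * a₂ - k * a₂ - ((a₂ - t : ℕ) : ℤ) * a₁ := by
    push_cast [Nat.cast_sub htlt.le]
    linear_combination ht'
  refine ⟨(k, a₂ - t), ⟨hk1, hklt, by omega, by omega, heq⟩, ?_⟩
  rintro ⟨q1, q2⟩ ⟨hq1, hq1', hq2, hq2', hqe⟩
  simp only at hqe hq1 hq1' hq2 hq2' ⊢
  have hdiff : ((q1 : ℤ) - k) * a₂ = (((a₂ - t : ℕ) : ℤ) - q2) * a₁ := by
    linear_combination hqe - heq
  have hdvd1 : (a₁ : ℤ) ∣ ((q1 : ℤ) - k) := by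
    have hco : IsCoprime (a₁ : ℤ) (a₂ : ℤ) := by
      rw [Int.isCoprime_iff_gcd_eq_one]
      exact_mod_cast hcop
    exact hco.dvd_of_dvd_mul_right (by rw [hdiff]; exact dvd_mul_left _ _)
  have hq1k : q1 = k := by
    obtain ⟨c, hc⟩ := hdvd1
    have hc0 : c = 0 := by
      by_contra hc0
      rcases lt_or_gt_of_ne hc0 with hneg | hpos
      · have : (a₁ : ℤ) * c ≤ -a₁ := by nlinarith [Int.lt_iff_add_one_le.mp hneg]
        omega
      · have : (a₁ : ℤ) ≤ a₁ * c := by nlinarith [Int.lt_iff_add_one_le.mp hpos]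
        omega
    rw [hc0, mul_zero] at hc
    omega
  have hq2t : (q2 : ℤ) = ((a₂ - t : ℕ) : ℤ) := by
    have ha1 : (a₁ : ℤ) ≠ 0 := by positivity
    have := hdiff
    rw [hq1k] at this
    have h0 : (((a₂ - t : ℕ) : ℤ) - q2) * a₁ = 0 := by linear_combination -this
    rcases mul_eq_zero.mp h0 with h | h
    · linarith
    · exact absurd h ha1
  have : q2 = a₂ - t := by exact_mod_cast hq2t
  exact Prod.ext hq1k this
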